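/- Let F be a nonarchimedean local field with ring of integers O, unit group U_F = O^×, and uniformizer ϖ. Let E be a smooth F*-module (every vector has open stabilizer in F* for the induced topology) with a finite filtration 0 = E₀ ⊆ E₁ ⊆ ... ⊆ E_r = E by F*-submodules such that F* acts by a character c_{i+1} on each quotient E_{i+1}/E_i. Then every vector v ∈ E lies in a finite-dimensional F*-invariant subspace of E. -/

import Mathlib

open Polynomial


/-- Let `F` be a nonarchimedean local field, with compact open unit
group `UF ⊆ Fˣ` and uniformizer `ϖ` (so that every `z ∈ Fˣ` is `ϖ ^ n * u` with
`u ∈ UF`).  Let `E` be a smooth `Fˣ`-module with a finite filtration by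
`Fˣ`-submodules such that `Fˣ` acts by a character `c i` on each successive quotient.
Then every vector of `E` lies in a finite-dimensional `Fˣ`-invariant subspace. -/
theorem stmt_1 {F : Type*} [Field F] [TopologicalSpace F] [IsTopologicalRing F]
    (UF : Subgroup Fˣ) (hUFopen : IsOpen (UF : Set Fˣ)) (hUFcompact : IsCompact (UF : Set Fˣ))
    (ϖ : Fˣ) (hdec : ∀ z : Fˣ, ∃ (n : ℤ) (u : Fˣ), u ∈ UF ∧ z = ϖ ^ n * u)
    {E : Type*} [AddCommGroup E] [Module ℂ E]
    (τ : Representation ℂ Fˣ E)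
    (hsmooth : ∀ v : E, ∃ W : Subgroup Fˣ, IsOpen (W : Set Fˣ) ∧ ∀ u ∈ W, τ u v = v)
    (r : ℕ) (Efil : Fin (r + 1) → Submodule ℂ E) (hmono : Monotone Efil)
    (hbot : Efil 0 = ⊥) (htop : Efil (Fin.last r) = ⊤)
    (c : Fin r → (Fˣ →* ℂˣ))
    (hquot : ∀ (i : Fin r) (t : Fˣ), ∀ v ∈ Efil i.succ,
      τ t v - (c i t : ℂ) • v ∈ Efil i.castSucc)
    (v : E) :
    ∃ W : Submodule ℂ E, v ∈ W ∧ (∀ t : Fˣ, ∀ w ∈ W, τ t w ∈ W) ∧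
      FiniteDimensional ℂ W := by
  classical
  -- trivial case r = 0
  rcases Nat.eq_zero_or_pos r with hr0 | hr
  · subst hr0
    refine ⟨⊥, ?_, ?_, ?_⟩
    · have : v ∈ Efil (Fin.last 0) := htop ▸ Submodule.mem_top
      rwa [show Fin.last 0 = 0 from rfl, hbot] at this
    · intro t w hw
      simp only [Submodule.mem_bot] at hw ⊢
      simp [hw]
    · infer_instance
  -- Step 1: finiteness of the UF-orbit of v
  obtain ⟨Wv, hWvopen, hWvfix⟩ := hsmooth v
  set f : Fˣ → E := fun u => τ u v with hf
  have horb : Set.Finite (f '' (UF : Set Fˣ)) := by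
    have hcov : (UF : Set Fˣ) ⊆ ⋃ u ∈ (UF : Set Fˣ), (u * ·) '' (Wv : Set Fˣ) := by
      intro u hu
      exact Set.mem_biUnion hu ⟨1, Wv.one_mem, mul_one u⟩
    obtain ⟨s, hsub, hsfin, hs⟩ := hUFcompact.elim_finite_subcover_image
      (fun u _ => (Homeomorph.mulLeft u).isOpenMap _ hWvopen) hcov
    have : f '' (UF : Set Fˣ) ⊆ f '' s := by
      rintro x ⟨u, hu, rfl⟩
      obtain ⟨u', hu', hmem⟩ := Set.mem_iUnion₂.1 (hs hu)
      obtain ⟨w, hw, rfl⟩ := hmem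
      refine ⟨u', hu', ?_⟩
      show τ u' v = τ (u' * w) v
      rw [map_mul]
      exact (congrArg (τ u') (hWvfix w hw)).symm
    exact ((hsfin.image f).subset this)
  set Oset : Set E := f '' (UF : Set Fˣ) with hOset
  set L : Module.End ℂ E := τ ϖ with hLdef
  -- Step 2: the polynomial
  set cc : ℕ → ℂ := fun i => if h : i < r then ((c ⟨i, h⟩ ϖ : ℂˣ) : ℂ) else 1 with hcc
  set q : ℕ → ℂ[X] := fun j => ∏ i ∈ Finset.range j, (X - C (cc i)) with hq
  have hfil : ∀ j (hj : j ≤ r), ∀ w ∈ Efil ⟨j, Nat.lt_succ_of_le hj⟩,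
      (Polynomial.aeval L (q j)) w = 0 := by
    intro j
    induction j with
    | zero =>
      intro hj w hw
      have h0 : (⟨0, Nat.lt_succ_of_le hj⟩ : Fin (r+1)) = 0 := rfl
      rw [h0, hbot, Submodule.mem_bot] at hw
      simp [hq, hw]
    | succ j ih =>
      intro hj w hw
      have hjr : j < r := hj
      have hqsucc : q (j + 1) = q j * (X - C (cc j)) := Finset.prod_range_succ _ _
      rw [hqsucc, map_mul]
      have h2 : (Polynomial.aeval L (X - C (cc j))) w = τ ϖ w - (cc j) • w := by
        simp [Module.algebraMap_end_apply, hLdef]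
      have hccj : cc j = ((c ⟨j, hjr⟩ ϖ : ℂˣ) : ℂ) := by simp [hcc, hjr]
      have hw' : w ∈ Efil (⟨j, hjr⟩ : Fin r).succ := by
        exact hw
      have hmem := hquot ⟨j, hjr⟩ ϖ w hw'
      have hcast : (⟨j, hjr⟩ : Fin r).castSucc = ⟨j, Nat.lt_succ_of_le (le_of_lt hjr)⟩ := rfl
      rw [hcast] at hmem
      have := ih (le_of_lt hjr) _ hmem
      rw [Module.End.mul_apply, h2, hccj]
      exact this
  set p : ℂ[X] := q r with hp
  have hP : ∀ w : E, (Polynomial.aeval L p) w = 0 := by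
    intro w
    have : w ∈ Efil ⟨r, Nat.lt_succ_of_le le_rfl⟩ := by
      have : (⟨r, Nat.lt_succ_of_le le_rfl⟩ : Fin (r+1)) = Fin.last r := rfl
      rw [this, htop]; trivial
    exact hfil r le_rfl w this
  have hmonic : p.Monic := monic_prod_of_monic _ _ (fun i _ => monic_X_sub_C _)
  have hdeg : p.natDegree = r := by
    rw [hp, hq, Polynomial.natDegree_prod_of_monic _ _ (fun i _ => monic_X_sub_C _)]
    simp [natDegree_X_sub_C]
  have ha : p.coeff 0 ≠ 0 := by
    rw [Polynomial.coeff_zero_eq_eval_zero, hp, hq, Polynomial.eval_prod]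
    rw [Finset.prod_ne_zero_iff]
    intro i hi
    have hir : i < r := Finset.mem_range.1 hi
    simp only [eval_sub, eval_X, eval_C, zero_sub, neg_ne_zero, hcc, dif_pos hir]
    exact Units.ne_zero _
  -- expansion
  have hexp : ∀ w : E, (0 : E) = ∑ i ∈ Finset.range (r + 1), p.coeff i • (L ^ i) w := by
    intro w
    have := hP w
    rw [Polynomial.aeval_eq_sum_range, hdeg] at this
    rw [← this]
    simp [LinearMap.sum_apply, LinearMap.smul_apply]
  -- the subspace
  set S : Set E := (fun pr : E × ℕ => (L ^ pr.2) pr.1) '' (Oset ×ˢ (Set.Iio r)) with hS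
  have hSfin : S.Finite := (horb.prod (Set.finite_Iio r)).image _
  set W : Submodule ℂ E := Submodule.span ℂ S with hW
  have hgen : ∀ w ∈ Oset, ∀ k < r, (L ^ k) w ∈ W := by
    intro w hw k hk
    exact Submodule.subset_span ⟨(w, k), ⟨hw, hk⟩, rfl⟩
  -- leading coeff trick : L^r w ∈ W
  have hLr : ∀ w ∈ Oset, (L ^ r) w ∈ W := by
    intro w hw
    have h := hexp w
    rw [Finset.sum_range_succ] at h
    have hcr : p.coeff r = 1 := by rw [← hdeg]; exact hmonic.coeff_natDegree
    rw [hcr, one_smul] at h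
    have : (L ^ r) w = -∑ i ∈ Finset.range r, p.coeff i • (L ^ i) w :=
      eq_neg_of_add_eq_zero_right h.symm
    rw [this]
    exact Submodule.neg_mem _ (Submodule.sum_mem _ fun i hi =>
      Submodule.smul_mem _ _ (hgen w hw i (Finset.mem_range.1 hi)))
  -- L-stability
  have hLW : ∀ x ∈ W, L x ∈ W := by
    intro x hx
    induction hx using Submodule.span_induction with
    | mem y hy =>
      obtain ⟨⟨w, k⟩, ⟨hw, hk⟩, rfl⟩ := hy
      have : L ((L ^ k) w) = (L ^ (k + 1)) w := by rw [pow_succ']; rfl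
      rw [this]
      rcases lt_or_eq_of_le (Nat.succ_le_of_lt hk) with h | h
      · exact hgen w hw _ h
      · rw [show k + 1 = r from h]; exact hLr w hw
    | zero => simp
    | add a b _ _ ha hb => rw [map_add]; exact Submodule.add_mem _ ha hb
    | smul a x _ hx => rw [map_smul]; exact Submodule.smul_mem _ _ hx
  -- inverse
  set T : Module.End ℂ E := τ ϖ⁻¹ with hTdef
  have hTL : ∀ x : E, T (L x) = x := by
    intro x
    have : T (L x) = τ (ϖ⁻¹ * ϖ) x := by rw [map_mul]; rfl
    rw [this, inv_mul_cancel, map_one]; rfl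
  have hTpow : ∀ (i : ℕ) (w : E), T ((L ^ (i+1)) w) = (L ^ i) w := by
    intro i w
    have : (L ^ (i+1)) w = L ((L ^ i) w) := by rw [pow_succ']; rfl
    rw [this, hTL]
  have hTW : ∀ x ∈ W, T x ∈ W := by
    intro x hx
    induction hx using Submodule.span_induction with
    | mem y hy =>
      obtain ⟨⟨w, k⟩, ⟨hw, hk⟩, rfl⟩ := hy
      cases k with
      | succ k => rw [hTpow]; exact hgen w hw k (Nat.lt_of_succ_lt hk)
      | zero =>
        -- T w ∈ W using the polynomial relation
        simp only [pow_zero, Module.End.one_apply]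
        have h := hexp w
        have h2 := congrArg T h
        rw [map_zero, map_sum] at h2
        rw [Finset.sum_range_succ'] at h2
        simp only [map_smul] at h2
        have h3 : ∀ i ∈ Finset.range r, p.coeff (i+1) • T ((L ^ (i+1)) w) = p.coeff (i+1) • (L ^ i) w := by
          intro i _; rw [hTpow]
        rw [Finset.sum_congr rfl h3] at h2
        simp only [pow_zero, Module.End.one_apply] at h2
        have h4 : p.coeff 0 • T w = -∑ i ∈ Finset.range r, p.coeff (i+1) • (L ^ i) w :=
          eq_neg_of_add_eq_zero_right h2.symm
        have h5 : T w = (p.coeff 0)⁻¹ • (p.coeff 0 • T w) := by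
          rw [smul_smul, inv_mul_cancel₀ ha, one_smul]
        rw [h5, h4]
        exact Submodule.smul_mem _ _ (Submodule.neg_mem _ (Submodule.sum_mem _ fun i hi =>
          Submodule.smul_mem _ _ (hgen w hw i (Finset.mem_range.1 hi))))
    | zero => simp
    | add a b _ _ ha hb => rw [map_add]; exact Submodule.add_mem _ ha hb
    | smul a x _ hx => rw [map_smul]; exact Submodule.smul_mem _ _ hx
  -- powers of ϖ
  have hzpow : ∀ (n : ℤ), ∀ x ∈ W, τ (ϖ ^ n) x ∈ W := by
    intro n
    induction n using Int.induction_on with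
    | zero => intro x hx; rw [zpow_zero, map_one]; exact hx
    | succ n ih =>
      intro x hx
      have : τ (ϖ ^ ((n : ℤ) + 1)) x = τ (ϖ ^ (n : ℤ)) (L x) := by
        rw [zpow_add, zpow_one, map_mul]; rfl
      rw [this]
      exact ih _ (hLW x hx)
    | pred n ih =>
      intro x hx
      have he : (ϖ : Fˣ) ^ (-(n : ℤ) - 1) = ϖ ^ (-(n : ℤ)) * ϖ⁻¹ := by
        rw [sub_eq_add_neg, zpow_add, zpow_neg_one]
      have : τ (ϖ ^ (-(n : ℤ) - 1)) x = τ (ϖ ^ (-(n : ℤ))) (T x) := by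
        rw [he, map_mul]; rfl
      rw [this]
      exact ih _ (hTW x hx)
  -- UF-stability
  have hUW : ∀ u ∈ UF, ∀ x ∈ W, τ u x ∈ W := by
    intro u hu x hx
    induction hx using Submodule.span_induction with
    | mem y hy =>
      obtain ⟨⟨w, k⟩, ⟨hw, hk⟩, rfl⟩ := hy
      have hc : Commute (τ u) L := by
        show τ u * L = L * τ u
        rw [hLdef, ← map_mul, ← map_mul, mul_comm]
      have hcomm : τ u ((L ^ k) w) = (L ^ k) (τ u w) := by
        calc τ u ((L ^ k) w) = (τ u * L ^ k) w := rfl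
        _ = (L ^ k * τ u) w := by rw [(hc.pow_right k).eq]
        _ = (L ^ k) (τ u w) := rfl
      rw [hcomm]
      obtain ⟨u', hu', rfl⟩ := hw
      have hfu : τ u (f u') = f (u * u') := by simp only [hf, map_mul]; rfl
      rw [hfu]
      exact hgen _ ⟨u * u', UF.mul_mem hu hu', rfl⟩ k hk
    | zero => simp
    | add a b _ _ ha hb => rw [map_add]; exact Submodule.add_mem _ ha hb
    | smul a x _ hx => rw [map_smul]; exact Submodule.smul_mem _ _ hx
  refine ⟨W, ?_, ?_, ?_⟩
  · have : v = (L ^ 0) (f 1) := by simp [hf]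
    rw [this]
    exact hgen _ ⟨1, UF.one_mem, rfl⟩ 0 hr
  · intro t x hx
    obtain ⟨n, u, hu, rfl⟩ := hdec t
    rw [map_mul]
    exact hzpow n _ (hUW u hu x hx)
  · exact FiniteDimensional.span_of_finite ℂ hSfin
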